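/- Fix α > 0, a Borel set A ⊆ ℝ² and C₀ > 0, and for each ε ∈ (0,1) let u_ε : ℤ² → ℝ satisfy F_ε^{p-edge}(u_ε,A) ≤ C₀·|log ε|. Set w_ε(i) := exp(2πι u_ε(i)) ∈ ℂ. For j ∈ {0,1,2,3} let s₀ = (0,0), s₁ = (1,0), s₂ = (0,1), s₃ = (1,1), and define the weak-membrane energies WM_j^{R,α}(w_ε,A) := Σ_{i ∈ 2ℤ²+s_j with [εi, ε(i+2e₁)] ⊆ A} min{ ½|w_ε(i+2e₁) − w_ε(i)|² , 2Rε } + Σ_{i ∈ 2ℤ²+s_j with [εi, ε(i+2e₂)] ⊆ A} min{ ½|w_ε(i+2e₂) − w_ε(i)|² , 2αε }. Then there exists C₁ > 0, depending only on α and C₀, such that for every R > 0 there exists ε_R > 0 with: for every ε ∈ (0, ε_R), F_ε^{p-edge}(u_ε,A) + C₁·√ε·|log ε| ≥ ¼·Σ_{j=0}^{3} WM_j^{R,α}(w_ε,A). -/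

import Mathlib

open scoped ENNReal

/-- The plane `ℝ²` with the Euclidean norm. -/
abbrev Plane : Type := EuclideanSpace ℝ (Fin 2)

/-- The lattice point `i ∈ ℤ²` viewed as a point of the plane. -/
noncomputable def toPlane (i : ℤ × ℤ) : Plane :=
  (WithLp.equiv 2 (Fin 2 → ℝ)).symm ![(i.1 : ℝ), (i.2 : ℝ)]

/-- `Z_ε^{e}(A)`: the lattice points `i` such that the closed segment `[εi, ε(i+e)]`
is contained in `A`. -/
def latticeSeg (ε : ℝ) (e : ℤ × ℤ) (A : Set Plane) : Set (ℤ × ℤ) :=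
  {i | segment ℝ (ε • toPlane i) (ε • toPlane (i + e)) ⊆ A}

/-- The distance of a real number to the set of integers. -/
noncomputable def distZ (t : ℝ) : ℝ := ⨅ n : ℤ, |t - n|

/-- The distance of a real number to the set of half-integers `(1/2)ℤ`. -/
noncomputable def distHalfZ (t : ℝ) : ℝ := ⨅ n : ℤ, |t - n / 2|

/-- The interaction potential `f₀(t) = 2π²t²`. -/
noncomputable def f0 (t : ℝ) : ℝ := 2 * Real.pi ^ 2 * t ^ 2

/-- The interaction potential `f₁(t) = 2π²·dist(t,ℤ)²`. -/
noncomputable def f1 (t : ℝ) : ℝ := 2 * Real.pi ^ 2 * distZ t ^ 2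

/-- The interaction potential `f_{1/2}(t) = 2π²·dist(t,(1/2)ℤ)²`. -/
noncomputable def fHalf (t : ℝ) : ℝ := 2 * Real.pi ^ 2 * distHalfZ t ^ 2

/-- The edge-dislocation energy `F_ε^{edge}(u,A)`, a sum in `[0,∞]`. -/
noncomputable def Fedge (ε : ℝ) (u : ℤ × ℤ → ℝ) (A : Set Plane) : ℝ≥0∞ :=
  (∑' i : latticeSeg ε (1, 0) A, ENNReal.ofReal (f0 (u ((i : ℤ × ℤ) + (1, 0)) - u (i : ℤ × ℤ))))
    + ∑' i : latticeSeg ε (0, 1) A, ENNReal.ofReal (f1 (u ((i : ℤ × ℤ) + (0, 1)) - u (i : ℤ × ℤ)))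

/-- The screw-dislocation energy `F_ε^{screw}(u,A)`, a sum in `[0,∞]`. -/
noncomputable def Fscrew (ε : ℝ) (u : ℤ × ℤ → ℝ) (A : Set Plane) : ℝ≥0∞ :=
  (∑' i : latticeSeg ε (1, 0) A, ENNReal.ofReal (f1 (u ((i : ℤ × ℤ) + (1, 0)) - u (i : ℤ × ℤ))))
    + ∑' i : latticeSeg ε (0, 1) A, ENNReal.ofReal (f1 (u ((i : ℤ × ℤ) + (0, 1)) - u (i : ℤ × ℤ)))

/-- The partial-edge-dislocation energy `F_ε^{p-edge}(u,A)` (with parameter `α`),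
a sum in `[0,∞]`. -/
noncomputable def Fpedge (α ε : ℝ) (u : ℤ × ℤ → ℝ) (A : Set Plane) : ℝ≥0∞ :=
  (∑' i : latticeSeg ε (1, 0) A, ENNReal.ofReal (f0 (u ((i : ℤ × ℤ) + (1, 0)) - u (i : ℤ × ℤ))))
    + (∑' i : latticeSeg ε (0, 1) A,
        ENNReal.ofReal (fHalf (u ((i : ℤ × ℤ) + (0, 1)) - u (i : ℤ × ℤ))))
    + ENNReal.ofReal (α / Real.pi ^ 2 * ε) *
        ∑' i : latticeSeg ε (0, 2) A, ENNReal.ofReal (f1 (u ((i : ℤ × ℤ) + (0, 2)) - u (i : ℤ × ℤ)))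

/-- The shift vectors `s₀ = (0,0)`, `s₁ = (1,0)`, `s₂ = (0,1)`, `s₃ = (1,1)`. -/
def sVec : Fin 4 → ℤ × ℤ := ![(0, 0), (1, 0), (0, 1), (1, 1)]

/-- Points of the shifted double lattice `2ℤ² + s_j` such that `[εi, ε(i+e)] ⊆ A`. -/
def subLat (ε : ℝ) (j : Fin 4) (e : ℤ × ℤ) (A : Set Plane) : Set (ℤ × ℤ) :=
  {i | (∃ k : ℤ × ℤ, i = 2 • k + sVec j) ∧ segment ℝ (ε • toPlane i) (ε • toPlane (i + e)) ⊆ A}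

/-- The weak-membrane energy `WM_j^{R,α}(w,A)` on the shifted double lattice `2ℤ² + s_j`. -/
noncomputable def WMen (α R ε : ℝ) (j : Fin 4) (w : ℤ × ℤ → ℂ) (A : Set Plane) : ℝ≥0∞ :=
  (∑' i : subLat ε j (2, 0) A,
      ENNReal.ofReal
        (min (1 / 2 * ‖w ((i : ℤ × ℤ) + (2, 0)) - w (i : ℤ × ℤ)‖ ^ 2) (2 * R * ε)))
    + ∑' i : subLat ε j (0, 2) A,
      ENNReal.ofReal
        (min (1 / 2 * ‖w ((i : ℤ × ℤ) + (0, 2)) - w (i : ℤ × ℤ)‖ ^ 2) (2 * α * ε))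

namespace Stmt10Aux

open Real

lemma distZ_nonneg (t : ℝ) : 0 ≤ distZ t := le_ciInf fun _ => abs_nonneg _
lemma distHalfZ_nonneg (t : ℝ) : 0 ≤ distHalfZ t := le_ciInf fun _ => abs_nonneg _
lemma distZ_ge {t c : ℝ} (h : ∀ n : ℤ, c ≤ |t - (n:ℝ)|) : c ≤ distZ t := le_ciInf h

lemma distHalfZ_eq (t : ℝ) : distHalfZ t = |t - (round (2*t) : ℝ)/2| := by
  apply le_antisymm
  · exact ciInf_le ⟨0, by rintro x ⟨n, rfl⟩; exact abs_nonneg _⟩ (round (2*t))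
  · apply le_ciInf
    intro n
    rcases eq_or_ne n (round (2*t)) with h | h
    · rw [h]
    · have h1 : |2*t - (round (2*t):ℝ)| ≤ 1/2 := abs_sub_round (2*t)
      have h3 : (1:ℤ) ≤ |round (2*t) - n| := Int.one_le_abs (sub_ne_zero.mpr (Ne.symm h))
      have h2 : (1:ℝ) ≤ |(round (2*t) : ℝ) - (n:ℝ)| := by exact_mod_cast h3
      have h4 : |(round (2*t):ℝ) - n| ≤ |(round (2*t):ℝ) - 2*t| + |2*t - n| :=
        abs_sub_le _ _ _
      have h5 : |(round (2*t):ℝ) - 2*t| = |2*t - (round (2*t):ℝ)| := abs_sub_comm _ _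
      have h6 : |2*t - (round (2*t):ℝ)| ≤ |2*t - (n:ℝ)| := by linarith
      have e1 : t - (round (2*t):ℝ)/2 = (2*t - round (2*t))/2 := by ring
      have e2 : t - (n:ℝ)/2 = (2*t - n)/2 := by ring
      rw [e1, e2, abs_div, abs_div, abs_two]
      linarith

lemma key_horiz (a b : ℝ) : 1 - Real.cos (2*π*(a+b)) ≤ 2 * f0 a + 2 * f0 b := by
  have h := Real.one_sub_sq_div_two_le_cos (x := 2*π*(a+b))
  unfold f0
  nlinarith [sq_nonneg (a-b), sq_nonneg π, sq_nonneg (a+b), pi_pos]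

set_option maxHeartbeats 1000000 in
lemma key_vert (α ε a b : ℝ) (hα : 0 < α) (hε : 0 < ε) (hεb : ε ≤ π^2/(64*α)) :
    min (1 - Real.cos (2*π*(a+b))) (2*α*ε)
      ≤ 2 * fHalf a + 2 * fHalf b
        + (α/π^2*ε*(4 + 256*α/(9*π^2)*ε)) * f1 (a+b) := by
  have hπ := Real.pi_pos
  obtain ⟨ma, hma⟩ : ∃ m : ℤ, m = round (2*a) := ⟨_, rfl⟩
  obtain ⟨mb, hmb⟩ : ∃ m : ℤ, m = round (2*b) := ⟨_, rfl⟩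
  obtain ⟨da, hdaDef⟩ : ∃ x : ℝ, x = distHalfZ a := ⟨_, rfl⟩
  obtain ⟨db, hdbDef⟩ : ∃ x : ℝ, x = distHalfZ b := ⟨_, rfl⟩
  obtain ⟨D, hDdef⟩ : ∃ x : ℝ, x = distZ (a+b) := ⟨_, rfl⟩
  have hda : da = |a - (ma:ℝ)/2| := by rw [hdaDef, hma]; exact distHalfZ_eq a
  have hdb : db = |b - (mb:ℝ)/2| := by rw [hdbDef, hmb]; exact distHalfZ_eq b
  have hda0 : 0 ≤ da := hdaDef ▸ distHalfZ_nonneg a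
  have hdb0 : 0 ≤ db := hdbDef ▸ distHalfZ_nonneg b
  have hD0 : 0 ≤ D := hDdef ▸ distZ_nonneg _
  have hfH : 2 * fHalf a + 2 * fHalf b = 4*π^2*(da^2 + db^2) := by
    unfold fHalf; rw [← hdaDef, ← hdbDef]; ring
  have hf1 : f1 (a+b) = 2*π^2*D^2 := by unfold f1; rw [← hDdef]
  have hcoef : 0 ≤ α/π^2*ε*(4 + 256*α/(9*π^2)*ε) := by positivity
  have hthird : 0 ≤ (α/π^2*ε*(4 + 256*α/(9*π^2)*ε)) * f1 (a+b) :=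
    mul_nonneg hcoef (hf1 ▸ by positivity)
  rcases Int.even_or_odd (ma + mb) with ⟨n, hn⟩ | ⟨n, hn⟩
  · -- even case
    have hsum : (ma:ℝ)/2 + (mb:ℝ)/2 = (n:ℝ) := by
      have : ((ma:ℝ) + mb) = (n:ℝ) + n := by exact_mod_cast congrArg (Int.cast : ℤ → ℝ) hn
      linarith
    have hsplit : (a+b) - (n:ℝ) = (a - ma/2) + (b - mb/2) := by rw [← hsum]; ring
    have habs : |(a+b) - (n:ℝ)| ≤ da + db := by
      rw [hsplit, hda, hdb]; exact abs_add_le _ _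
    have key : 1 - Real.cos (2*π*(a+b)) ≤ 2*π^2*((a+b) - (n:ℝ))^2 := by
      have h := Real.one_sub_sq_div_two_le_cos (x := 2*π*(a+b) - (n:ℝ)*(2*π))
      rw [Real.cos_sub_int_mul_two_pi] at h
      nlinarith [h]
    have hsq : ((a+b) - (n:ℝ))^2 ≤ (da + db)^2 := by
      have := pow_le_pow_left₀ (abs_nonneg ((a+b) - (n:ℝ))) habs 2
      rwa [sq_abs] at this
    refine le_trans (min_le_left _ _) (le_trans key ?_)
    rw [hfH]
    have h1 : ((a+b) - (n:ℝ))^2 ≤ 2*(da^2+db^2) := by nlinarith [sq_nonneg (da - db)]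
    have h2 := mul_le_mul_of_nonneg_left h1 (sq_nonneg π)
    nlinarith [h2]
  · -- odd case
    have hsum : (ma:ℝ)/2 + (mb:ℝ)/2 = (n:ℝ) + 1/2 := by
      have : ((ma:ℝ) + mb) = 2*(n:ℝ) + 1 := by exact_mod_cast congrArg (Int.cast : ℤ → ℝ) hn
      linarith
    obtain ⟨t, htDef⟩ : ∃ x : ℝ, x = da + db := ⟨_, rfl⟩
    have ht0 : 0 ≤ t := by rw [htDef]; positivity
    have habs : |(a+b) - ((n:ℝ)+1/2)| ≤ t := by
      have hsplit : (a+b) - ((n:ℝ)+1/2) = (a - ma/2) + (b - mb/2) := by rw [← hsum]; ring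
      rw [hsplit, htDef, hda, hdb]; exact abs_add_le _ _
    have hD : 1/2 - t ≤ D := by
      rw [hDdef]
      apply distZ_ge
      intro m
      have htr : |((n:ℝ)+1/2) - (m:ℝ)| ≤ |((n:ℝ)+1/2) - (a+b)| + |(a+b) - (m:ℝ)| :=
        abs_sub_le _ _ _
      have hcm : |((n:ℝ)+1/2) - (a+b)| = |(a+b) - ((n:ℝ)+1/2)| := abs_sub_comm _ _
      have hhalf : (1:ℝ)/2 ≤ |((n:ℝ)+1/2) - (m:ℝ)| := by
        have e : ((n:ℝ)+1/2) - (m:ℝ) = ((2*(n-m)+1 : ℤ):ℝ)/2 := by push_cast; ring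
        have h1 : (1:ℤ) ≤ |2*(n-m)+1| := Int.one_le_abs (by omega)
        have h1' : (1:ℝ) ≤ |((2*(n-m)+1 : ℤ):ℝ)| := by exact_mod_cast h1
        rw [e, abs_div, abs_two]
        linarith
      linarith
    rcases le_or_gt (1/8 : ℝ) t with h8 | h8
    · -- t ≥ 1/8
      refine le_trans (min_le_right _ _) ?_
      have h2αε : 2*α*ε ≤ π^2/32 := by
        have h := mul_le_mul_of_nonneg_left hεb (by positivity : (0:ℝ) ≤ 2*α)
        have he : 2*α*(π^2/(64*α)) = π^2/32 := by field_simp; ring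
        linarith
      have hts : (1:ℝ)/64 ≤ t^2 := by nlinarith [sq_nonneg (t - 1/8)]
      have ht2 : π^2/32 ≤ 2*π^2*t^2 := by
        have := mul_le_mul_of_nonneg_left hts (sq_nonneg π)
        linarith
      have ht3 : 2*π^2*t^2 ≤ 4*π^2*(da^2+db^2) := by
        have h1 : t^2 ≤ 2*(da^2+db^2) := by rw [htDef]; nlinarith [sq_nonneg (da - db)]
        have h2 := mul_le_mul_of_nonneg_left h1 (sq_nonneg π)
        nlinarith [h2]
      rw [hfH]
      linarith
    · -- t < 1/8
      have hD2 : (1/2 - t)^2 ≤ D^2 := by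
        have h0 : (0:ℝ) ≤ 1/2 - t := by linarith
        exact pow_le_pow_left₀ h0 hD 2
      have hD9 : ((3:ℝ)/8)^2 ≤ D^2 := by
        have h38 : (3:ℝ)/8 ≤ D := by linarith
        exact pow_le_pow_left₀ (by norm_num) h38 2
      obtain ⟨q, hqDef⟩ : ∃ x : ℝ, x = α*ε/π := ⟨_, rfl⟩
      have hq0 : 0 ≤ q := by rw [hqDef]; positivity
      have hsubq : α*ε = π*q := by rw [hqDef]; field_simp
      have goal' : 2*(π*q) ≤ 2*π^2*t^2 + 8*(π*q)*(1/2-t)^2 + 8*q^2 := by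
        nlinarith [sq_nonneg (π*t - 2*q), mul_nonneg (mul_nonneg hπ.le hq0) (sq_nonneg t)]
      have hexp : (α/π^2*ε*(4 + 256*α/(9*π^2)*ε)) * f1 (a+b)
          = 8*α*ε*D^2 + 512*α^2*ε^2/(9*π^2) * D^2 := by
        rw [hf1]; field_simp; ring
      have hb1 : 8*(π*q)*(1/2-t)^2 ≤ 8*α*ε*D^2 := by
        rw [← hsubq]
        have := mul_le_mul_of_nonneg_left hD2 (by positivity : (0:ℝ) ≤ 8*α*ε)
        linarith
      have hb2 : 8*q^2 ≤ 512*α^2*ε^2/(9*π^2) * D^2 := by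
        have h1 := mul_le_mul_of_nonneg_left hD9 (by positivity : (0:ℝ) ≤ 512*α^2*ε^2/(9*π^2))
        have h2 : 512*α^2*ε^2/(9*π^2) * (((3:ℝ)/8)^2) = 8*q^2 := by
          rw [hqDef]; field_simp; ring
        linarith
      have ht2 : 2*π^2*t^2 ≤ 4*π^2*(da^2+db^2) := by
        have h1 : t^2 ≤ 2*(da^2+db^2) := by rw [htDef]; nlinarith [sq_nonneg (da - db)]
        have h2 := mul_le_mul_of_nonneg_left h1 (sq_nonneg π)
        nlinarith [h2]
      refine le_trans (min_le_right _ _) ?_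
      rw [hfH, hexp]
      have hae : 2*α*ε = 2*(π*q) := by rw [mul_assoc, hsubq]
      linarith

lemma one_sub_cos_eq (x y : ℝ) :
    1/2 * ‖Complex.exp (2*(π:ℂ)*Complex.I*(y:ℂ)) - Complex.exp (2*(π:ℂ)*Complex.I*(x:ℂ))‖ ^ 2
      = 1 - Real.cos (2*π*(y-x)) := by
  have hA : (2*(π:ℂ)*Complex.I*(y:ℂ)) = ((2*π*x : ℝ):ℂ)*Complex.I + ((2*π*(y-x) : ℝ):ℂ)*Complex.I := by
    push_cast; ring
  have hB : (2*(π:ℂ)*Complex.I*(x:ℂ)) = ((2*π*x : ℝ):ℂ)*Complex.I := by push_cast; ring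
  rw [hA, hB, Complex.exp_add]
  have hfact : Complex.exp (((2*π*x : ℝ):ℂ)*Complex.I) * Complex.exp (((2*π*(y-x) : ℝ):ℂ)*Complex.I)
      - Complex.exp (((2*π*x : ℝ):ℂ)*Complex.I)
      = Complex.exp (((2*π*x : ℝ):ℂ)*Complex.I) * (Complex.exp (((2*π*(y-x) : ℝ):ℂ)*Complex.I) - 1) := by
    ring
  rw [hfact, norm_mul, Complex.norm_exp_ofReal_mul_I, one_mul]
  have hsq : ∀ θ : ℝ, (‖Complex.exp ((θ:ℂ)*Complex.I) - 1‖)^2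
      = (Real.cos θ - 1)^2 + (Real.sin θ)^2 := by
    intro θ
    rw [Complex.sq_norm, Complex.normSq_apply, Complex.sub_re, Complex.sub_im,
      Complex.exp_ofReal_mul_I_re, Complex.exp_ofReal_mul_I_im, Complex.one_re, Complex.one_im]
    ring
  rw [hsq (2*π*(y-x))]
  nlinarith [Real.sin_sq_add_cos_sq (2*π*(y-x))]

lemma toPlane_add (i j : ℤ × ℤ) : toPlane (i + j) = toPlane i + toPlane j := by
  ext x
  fin_cases x <;>
    simp [toPlane, PiLp.add_apply, Prod.fst_add, Prod.snd_add]

lemma mem_seg (ε : ℝ) (i e : ℤ × ℤ) :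
    ε • toPlane (i + e) ∈ segment ℝ (ε • toPlane i) (ε • toPlane (i + (e + e))) := by
  refine ⟨1/2, 1/2, by norm_num, by norm_num, by norm_num, ?_⟩
  rw [toPlane_add i (e+e), toPlane_add e e, toPlane_add i e]
  module

lemma latticeSeg_double {ε : ℝ} {A : Set Plane} {i e : ℤ × ℤ}
    (h : i ∈ latticeSeg ε (e + e) A) :
    i ∈ latticeSeg ε e A ∧ i + e ∈ latticeSeg ε e A := by
  constructor
  · intro x hx
    exact h ((convex_segment _ _).segment_subset (left_mem_segment ℝ _ _) (mem_seg ε i e) hx)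
  · intro x hx
    apply h
    have h2 : i + e + e = i + (e + e) := by rw [add_assoc]
    refine (convex_segment _ _).segment_subset (mem_seg ε i e) ?_ hx
    rw [h2]
    exact right_mem_segment ℝ _ _

lemma subLat_subset (ε : ℝ) (j : Fin 4) (e : ℤ × ℤ) (A : Set Plane) :
    subLat ε j e A ⊆ latticeSeg ε e A := fun _ hi => hi.2

lemma subLat_unique {ε : ℝ} {e : ℤ × ℤ} {A : Set Plane} {i : ℤ × ℤ} {j j' : Fin 4}
    (h : i ∈ subLat ε j e A) (h' : i ∈ subLat ε j' e A) : j = j' := by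
  obtain ⟨⟨k, hk⟩, -⟩ := h
  obtain ⟨⟨k', hk'⟩, -⟩ := h'
  have heq : (2 : ℕ) • k + sVec j = (2 : ℕ) • k' + sVec j' := hk ▸ hk'
  have h1 : 2 * k.1 + (sVec j).1 = 2 * k'.1 + (sVec j').1 := by
    have := congrArg Prod.fst heq
    simpa [Prod.fst_add, nsmul_eq_mul] using this
  have h2 : 2 * k.2 + (sVec j).2 = 2 * k'.2 + (sVec j').2 := by
    have := congrArg Prod.snd heq
    simpa [Prod.snd_add, nsmul_eq_mul] using this
  fin_cases j <;> fin_cases j' <;> simp [sVec] at h1 h2 ⊢ <;> omega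

lemma sum_ind_le (ε : ℝ) (e : ℤ × ℤ) (A : Set Plane) (g : ℤ × ℤ → ℝ≥0∞) (i : ℤ × ℤ) :
    ∑ j : Fin 4, (subLat ε j e A).indicator g i ≤ (latticeSeg ε e A).indicator g i := by
  by_cases H : ∃ j, i ∈ subLat ε j e A
  · obtain ⟨j₀, hj₀⟩ := H
    rw [Finset.sum_eq_single j₀
      (fun j _ hj => Set.indicator_of_notMem (fun hm => hj (subLat_unique hm hj₀)) g)
      (fun h => absurd (Finset.mem_univ j₀) h)]
    rw [Set.indicator_of_mem hj₀, Set.indicator_of_mem (subLat_subset ε j₀ e A hj₀)]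
  · push_neg at H
    simp only [Set.indicator_of_notMem (H _)]
    simp

lemma sum_subLat_tsum (ε : ℝ) (e : ℤ × ℤ) (A : Set Plane) (g : ℤ × ℤ → ℝ≥0∞) :
    ∑ j : Fin 4, ∑' i : subLat ε j e A, g i ≤ ∑' i, (latticeSeg ε e A).indicator g i :=
  calc ∑ j : Fin 4, ∑' i : subLat ε j e A, g i
      = ∑ j : Fin 4, ∑' i, (subLat ε j e A).indicator g i :=
        Finset.sum_congr rfl fun j _ => tsum_subtype _ _
    _ = ∑' i, ∑ j : Fin 4, (subLat ε j e A).indicator g i :=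
        (Summable.tsum_finsetSum fun _ _ => ENNReal.summable).symm
    _ ≤ ∑' i, (latticeSeg ε e A).indicator g i := ENNReal.tsum_le_tsum (sum_ind_le ε e A g)

lemma tsum_shift (F : ℤ × ℤ → ℝ≥0∞) (c : ℤ × ℤ) : ∑' i, F (i + c) = ∑' i, F i := by
  simpa using (Equiv.addRight c).tsum_eq F

lemma ofReal_two_mul (x : ℝ) : ENNReal.ofReal (2 * x) = 2 * ENNReal.ofReal x := by
  rw [ENNReal.ofReal_mul (by norm_num : (0:ℝ) ≤ 2), ENNReal.ofReal_ofNat]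

end Stmt10Aux
namespace Stmt10Aux

open Real

lemma horiz_bound (v : ℤ × ℤ → ℝ) (ε R : ℝ) (A : Set Plane) :
    (∑' i, (latticeSeg ε (2,0) A).indicator
        (fun i => ENNReal.ofReal (min (1/2 * ‖Complex.exp (2*(π:ℂ)*Complex.I*((v (i+(2,0)) : ℝ):ℂ))
            - Complex.exp (2*(π:ℂ)*Complex.I*((v i : ℝ):ℂ))‖ ^ 2) (2*R*ε))) i)
      ≤ 4 * ∑' i, (latticeSeg ε (1,0) A).indicator
          (fun i => ENNReal.ofReal (f0 (v (i+(1,0)) - v i))) i := by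
  have h20 : ((2,0) : ℤ × ℤ) = (1,0) + (1,0) := by decide
  have key : ∀ i : ℤ × ℤ, (latticeSeg ε (2,0) A).indicator
        (fun i => ENNReal.ofReal (min (1/2 * ‖Complex.exp (2*(π:ℂ)*Complex.I*((v (i+(2,0)) : ℝ):ℂ))
            - Complex.exp (2*(π:ℂ)*Complex.I*((v i : ℝ):ℂ))‖ ^ 2) (2*R*ε))) i
      ≤ 2 * (latticeSeg ε (1,0) A).indicator
            (fun i => ENNReal.ofReal (f0 (v (i+(1,0)) - v i))) i
        + 2 * (latticeSeg ε (1,0) A).indicator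
            (fun i => ENNReal.ofReal (f0 (v (i+(1,0)) - v i))) (i + (1,0)) := by
    intro i
    by_cases hi : i ∈ latticeSeg ε (2,0) A
    · have hsub : i ∈ latticeSeg ε ((1,0) : ℤ × ℤ) A ∧
          i + (1,0) ∈ latticeSeg ε ((1,0) : ℤ × ℤ) A :=
        latticeSeg_double (by rwa [h20] at hi)
      rw [Set.indicator_of_mem hi, Set.indicator_of_mem hsub.1, Set.indicator_of_mem hsub.2]
      have hii : i + (1,0) + (1,0) = i + (2,0) := by rw [add_assoc]; norm_num
      rw [hii]
      have hmin : min (1/2 * ‖Complex.exp (2*(π:ℂ)*Complex.I*((v (i+(2,0)) : ℝ):ℂ))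
            - Complex.exp (2*(π:ℂ)*Complex.I*((v i : ℝ):ℂ))‖ ^ 2) (2*R*ε)
          ≤ 2 * f0 (v (i+(1,0)) - v i) + 2 * f0 (v (i+(2,0)) - v (i+(1,0))) := by
        have hk := key_horiz (v (i+(1,0)) - v i) (v (i+(2,0)) - v (i+(1,0)))
        have hab : (v (i+(1,0)) - v i) + (v (i+(2,0)) - v (i+(1,0))) = v (i+(2,0)) - v i := by
          ring
        rw [hab] at hk
        calc min _ _ ≤ _ := min_le_left _ _
          _ = 1 - Real.cos (2*π*(v (i+(2,0)) - v i)) := one_sub_cos_eq (v i) (v (i+(2,0)))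
          _ ≤ _ := hk
      calc ENNReal.ofReal _ ≤ ENNReal.ofReal (2 * f0 (v (i+(1,0)) - v i)
              + 2 * f0 (v (i+(2,0)) - v (i+(1,0)))) := ENNReal.ofReal_le_ofReal hmin
        _ ≤ ENNReal.ofReal (2 * f0 (v (i+(1,0)) - v i))
              + ENNReal.ofReal (2 * f0 (v (i+(2,0)) - v (i+(1,0)))) := ENNReal.ofReal_add_le
        _ = _ := by rw [ofReal_two_mul, ofReal_two_mul]
    · rw [Set.indicator_of_notMem hi]
      exact zero_le
  calc (∑' i, (latticeSeg ε (2,0) A).indicator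
        (fun i => ENNReal.ofReal (min (1/2 * ‖Complex.exp (2*(π:ℂ)*Complex.I*((v (i+(2,0)) : ℝ):ℂ))
            - Complex.exp (2*(π:ℂ)*Complex.I*((v i : ℝ):ℂ))‖ ^ 2) (2*R*ε))) i)
      ≤ ∑' i, (2 * (latticeSeg ε (1,0) A).indicator
            (fun i => ENNReal.ofReal (f0 (v (i+(1,0)) - v i))) i
        + 2 * (latticeSeg ε (1,0) A).indicator
            (fun i => ENNReal.ofReal (f0 (v (i+(1,0)) - v i))) (i + (1,0))) :=
        ENNReal.tsum_le_tsum key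
    _ = 2 * (∑' i, (latticeSeg ε (1,0) A).indicator
            (fun i => ENNReal.ofReal (f0 (v (i+(1,0)) - v i))) i)
        + 2 * ∑' i, (latticeSeg ε (1,0) A).indicator
            (fun i => ENNReal.ofReal (f0 (v (i+(1,0)) - v i))) (i + (1,0)) := by
        rw [ENNReal.tsum_add, ENNReal.tsum_mul_left, ENNReal.tsum_mul_left]
    _ = 2 * (∑' i, (latticeSeg ε (1,0) A).indicator
            (fun i => ENNReal.ofReal (f0 (v (i+(1,0)) - v i))) i)
        + 2 * ∑' i, (latticeSeg ε (1,0) A).indicator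
            (fun i => ENNReal.ofReal (f0 (v (i+(1,0)) - v i))) i := by
        rw [tsum_shift ((latticeSeg ε (1,0) A).indicator
            (fun i => ENNReal.ofReal (f0 (v (i+(1,0)) - v i)))) ((1,0) : ℤ × ℤ)]
    _ = _ := by ring

lemma vert_bound (α : ℝ) (hα : 0 < α) (v : ℤ × ℤ → ℝ) (ε : ℝ) (hε : 0 < ε)
    (hεb : ε ≤ π^2/(64*α)) (A : Set Plane) :
    (∑' i, (latticeSeg ε (0,2) A).indicator
        (fun i => ENNReal.ofReal (min (1/2 * ‖Complex.exp (2*(π:ℂ)*Complex.I*((v (i+(0,2)) : ℝ):ℂ))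
            - Complex.exp (2*(π:ℂ)*Complex.I*((v i : ℝ):ℂ))‖ ^ 2) (2*α*ε))) i)
      ≤ 4 * (∑' i, (latticeSeg ε (0,1) A).indicator
            (fun i => ENNReal.ofReal (fHalf (v (i+(0,1)) - v i))) i)
        + ENNReal.ofReal (α/π^2*ε*(4 + 256*α/(9*π^2)*ε)) *
            ∑' i, (latticeSeg ε (0,2) A).indicator
              (fun i => ENNReal.ofReal (f1 (v (i+(0,2)) - v i))) i := by
  have h02 : ((0,2) : ℤ × ℤ) = (0,1) + (0,1) := by decide
  have hcoef : (0:ℝ) ≤ α/π^2*ε*(4 + 256*α/(9*π^2)*ε) := by positivity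
  have key : ∀ i : ℤ × ℤ, (latticeSeg ε (0,2) A).indicator
        (fun i => ENNReal.ofReal (min (1/2 * ‖Complex.exp (2*(π:ℂ)*Complex.I*((v (i+(0,2)) : ℝ):ℂ))
            - Complex.exp (2*(π:ℂ)*Complex.I*((v i : ℝ):ℂ))‖ ^ 2) (2*α*ε))) i
      ≤ 2 * (latticeSeg ε (0,1) A).indicator
            (fun i => ENNReal.ofReal (fHalf (v (i+(0,1)) - v i))) i
        + 2 * (latticeSeg ε (0,1) A).indicator
            (fun i => ENNReal.ofReal (fHalf (v (i+(0,1)) - v i))) (i + (0,1))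
        + ENNReal.ofReal (α/π^2*ε*(4 + 256*α/(9*π^2)*ε)) *
            (latticeSeg ε (0,2) A).indicator
              (fun i => ENNReal.ofReal (f1 (v (i+(0,2)) - v i))) i := by
    intro i
    by_cases hi : i ∈ latticeSeg ε (0,2) A
    · have hsub : i ∈ latticeSeg ε ((0,1) : ℤ × ℤ) A ∧
          i + (0,1) ∈ latticeSeg ε ((0,1) : ℤ × ℤ) A :=
        latticeSeg_double (by rwa [h02] at hi)
      rw [Set.indicator_of_mem hi, Set.indicator_of_mem hsub.1, Set.indicator_of_mem hsub.2,
        Set.indicator_of_mem hi]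
      have hii : i + (0,1) + (0,1) = i + (0,2) := by rw [add_assoc]; norm_num
      rw [hii]
      have hmin : min (1/2 * ‖Complex.exp (2*(π:ℂ)*Complex.I*((v (i+(0,2)) : ℝ):ℂ))
            - Complex.exp (2*(π:ℂ)*Complex.I*((v i : ℝ):ℂ))‖ ^ 2) (2*α*ε)
          ≤ 2 * fHalf (v (i+(0,1)) - v i) + 2 * fHalf (v (i+(0,2)) - v (i+(0,1)))
            + (α/π^2*ε*(4 + 256*α/(9*π^2)*ε)) * f1 (v (i+(0,2)) - v i) := by
        have hk := key_vert α ε (v (i+(0,1)) - v i) (v (i+(0,2)) - v (i+(0,1))) hα hε hεb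
        have hab : (v (i+(0,1)) - v i) + (v (i+(0,2)) - v (i+(0,1))) = v (i+(0,2)) - v i := by
          ring
        rw [hab] at hk
        calc min (1/2 * ‖Complex.exp (2*(π:ℂ)*Complex.I*((v (i+(0,2)) : ℝ):ℂ))
              - Complex.exp (2*(π:ℂ)*Complex.I*((v i : ℝ):ℂ))‖ ^ 2) (2*α*ε)
            = min (1 - Real.cos (2*π*(v (i+(0,2)) - v i))) (2*α*ε) := by
              rw [one_sub_cos_eq (v i) (v (i+(0,2)))]
          _ ≤ _ := hk
      calc ENNReal.ofReal _ ≤ ENNReal.ofReal (2 * fHalf (v (i+(0,1)) - v i)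
              + 2 * fHalf (v (i+(0,2)) - v (i+(0,1)))
              + (α/π^2*ε*(4 + 256*α/(9*π^2)*ε)) * f1 (v (i+(0,2)) - v i)) :=
            ENNReal.ofReal_le_ofReal hmin
        _ ≤ ENNReal.ofReal (2 * fHalf (v (i+(0,1)) - v i)
              + 2 * fHalf (v (i+(0,2)) - v (i+(0,1))))
              + ENNReal.ofReal ((α/π^2*ε*(4 + 256*α/(9*π^2)*ε)) * f1 (v (i+(0,2)) - v i)) :=
            ENNReal.ofReal_add_le
        _ ≤ (ENNReal.ofReal (2 * fHalf (v (i+(0,1)) - v i))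
              + ENNReal.ofReal (2 * fHalf (v (i+(0,2)) - v (i+(0,1)))))
              + ENNReal.ofReal ((α/π^2*ε*(4 + 256*α/(9*π^2)*ε)) * f1 (v (i+(0,2)) - v i)) :=
            add_le_add_left ENNReal.ofReal_add_le _
        _ = _ := by
            rw [ofReal_two_mul, ofReal_two_mul, ENNReal.ofReal_mul hcoef]
    · rw [Set.indicator_of_notMem hi]
      exact zero_le
  calc (∑' i, (latticeSeg ε (0,2) A).indicator
        (fun i => ENNReal.ofReal (min (1/2 * ‖Complex.exp (2*(π:ℂ)*Complex.I*((v (i+(0,2)) : ℝ):ℂ))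
            - Complex.exp (2*(π:ℂ)*Complex.I*((v i : ℝ):ℂ))‖ ^ 2) (2*α*ε))) i)
      ≤ ∑' i, (2 * (latticeSeg ε (0,1) A).indicator
            (fun i => ENNReal.ofReal (fHalf (v (i+(0,1)) - v i))) i
        + 2 * (latticeSeg ε (0,1) A).indicator
            (fun i => ENNReal.ofReal (fHalf (v (i+(0,1)) - v i))) (i + (0,1))
        + ENNReal.ofReal (α/π^2*ε*(4 + 256*α/(9*π^2)*ε)) *
            (latticeSeg ε (0,2) A).indicator
              (fun i => ENNReal.ofReal (f1 (v (i+(0,2)) - v i))) i) :=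
        ENNReal.tsum_le_tsum key
    _ = (2 * (∑' i, (latticeSeg ε (0,1) A).indicator
            (fun i => ENNReal.ofReal (fHalf (v (i+(0,1)) - v i))) i)
        + 2 * ∑' i, (latticeSeg ε (0,1) A).indicator
            (fun i => ENNReal.ofReal (fHalf (v (i+(0,1)) - v i))) (i + (0,1)))
        + ENNReal.ofReal (α/π^2*ε*(4 + 256*α/(9*π^2)*ε)) *
            ∑' i, (latticeSeg ε (0,2) A).indicator
              (fun i => ENNReal.ofReal (f1 (v (i+(0,2)) - v i))) i := by
        rw [ENNReal.tsum_add, ENNReal.tsum_add, ENNReal.tsum_mul_left, ENNReal.tsum_mul_left,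
          ENNReal.tsum_mul_left]
    _ = (2 * (∑' i, (latticeSeg ε (0,1) A).indicator
            (fun i => ENNReal.ofReal (fHalf (v (i+(0,1)) - v i))) i)
        + 2 * ∑' i, (latticeSeg ε (0,1) A).indicator
            (fun i => ENNReal.ofReal (fHalf (v (i+(0,1)) - v i))) i)
        + ENNReal.ofReal (α/π^2*ε*(4 + 256*α/(9*π^2)*ε)) *
            ∑' i, (latticeSeg ε (0,2) A).indicator
              (fun i => ENNReal.ofReal (f1 (v (i+(0,2)) - v i))) i := by
        rw [tsum_shift ((latticeSeg ε (0,1) A).indicator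
            (fun i => ENNReal.ofReal (fHalf (v (i+(0,1)) - v i)))) ((0,1) : ℤ × ℤ)]
    _ = _ := by ring

end Stmt10Aux
open Stmt10Aux in
/-- lower bound of the partial-edge energies by the weak-membrane energies on the
four shifted double lattices, with a constant `C₁` depending only on `α` and `C₀`. -/
theorem stmt10 (α C₀ : ℝ) (hα : 0 < α) (hC₀ : 0 < C₀) :
    ∃ C₁ : ℝ, 0 < C₁ ∧
      ∀ A : Set Plane, MeasurableSet A →
        ∀ u : ℝ → ℤ × ℤ → ℝ,
          (∀ ε ∈ Set.Ioo (0 : ℝ) 1, Fpedge α ε (u ε) A ≤ ENNReal.ofReal (C₀ * |Real.log ε|)) →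
          ∀ R : ℝ, 0 < R → ∃ εR : ℝ, 0 < εR ∧
            ∀ ε ∈ Set.Ioo (0 : ℝ) εR, ε ∈ Set.Ioo (0 : ℝ) 1 →
              (1 / 4 : ℝ≥0∞) *
                  ∑ j : Fin 4,
                    WMen α R ε j (fun i => Complex.exp (2 * Real.pi * Complex.I * (u ε i : ℂ))) A
                ≤ Fpedge α ε (u ε) A + ENNReal.ofReal (C₁ * Real.sqrt ε * |Real.log ε|) := by
  have hπ := Real.pi_pos
  refine ⟨256*α/(9*Real.pi^2)*C₀/4 + 1, by positivity, ?_⟩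
  intro A _hA u hu R hR
  refine ⟨Real.pi^2/(64*α), by positivity, ?_⟩
  rintro ε ⟨hε0, hεR⟩ hε1
  have hε1' : ε < 1 := hε1.2
  have hεb : ε ≤ Real.pi^2/(64*α) := le_of_lt hεR
  -- notation
  set v : ℤ × ℤ → ℝ := u ε with hv
  have hF : Fpedge α ε v A
      = (∑' i, (latticeSeg ε (1,0) A).indicator
          (fun i => ENNReal.ofReal (f0 (v (i+(1,0)) - v i))) i)
        + (∑' i, (latticeSeg ε (0,1) A).indicator
          (fun i => ENNReal.ofReal (fHalf (v (i+(0,1)) - v i))) i)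
        + ENNReal.ofReal (α / Real.pi^2 * ε) *
          ∑' i, (latticeSeg ε (0,2) A).indicator
            (fun i => ENNReal.ofReal (f1 (v (i+(0,2)) - v i))) i := by
    unfold Fpedge
    rw [tsum_subtype (latticeSeg ε (1,0) A)
        (fun i => ENNReal.ofReal (f0 (v (i+(1,0)) - v i))),
      tsum_subtype (latticeSeg ε (0,1) A)
        (fun i => ENNReal.ofReal (fHalf (v (i+(0,1)) - v i))),
      tsum_subtype (latticeSeg ε (0,2) A)
        (fun i => ENNReal.ofReal (f1 (v (i+(0,2)) - v i)))]
  have hFle : Fpedge α ε v A ≤ ENNReal.ofReal (C₀ * |Real.log ε|) := hu ε hε1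
  have hmain : ∑ j : Fin 4,
        WMen α R ε j (fun i => Complex.exp (2 * Real.pi * Complex.I * (v i : ℂ))) A
      ≤ 4 * (Fpedge α ε v A
          + ENNReal.ofReal ((256*α/(9*Real.pi^2)*C₀/4 + 1) * Real.sqrt ε * |Real.log ε|)) := by
    have h1 : ∑ j : Fin 4,
          WMen α R ε j (fun i => Complex.exp (2 * Real.pi * Complex.I * (v i : ℂ))) A
        ≤ (∑' i, (latticeSeg ε (2,0) A).indicator
            (fun i => ENNReal.ofReal (min (1/2 * ‖Complex.exp (2*(Real.pi:ℂ)*Complex.I*((v (i+(2,0)) : ℝ):ℂ))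
                - Complex.exp (2*(Real.pi:ℂ)*Complex.I*((v i : ℝ):ℂ))‖ ^ 2) (2*R*ε))) i)
          + ∑' i, (latticeSeg ε (0,2) A).indicator
            (fun i => ENNReal.ofReal (min (1/2 * ‖Complex.exp (2*(Real.pi:ℂ)*Complex.I*((v (i+(0,2)) : ℝ):ℂ))
                - Complex.exp (2*(Real.pi:ℂ)*Complex.I*((v i : ℝ):ℂ))‖ ^ 2) (2*α*ε))) i := by
      unfold WMen
      rw [Finset.sum_add_distrib]
      exact add_le_add (sum_subLat_tsum ε (2,0) A _) (sum_subLat_tsum ε (0,2) A _)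
    have h2 := horiz_bound v ε R A
    have h3 := vert_bound α hα v ε hε0 hεb A
    refine le_trans h1 (le_trans (add_le_add h2 h3) ?_)
    -- arithmetic in ℝ≥0∞
    have hx0 : (0:ℝ) ≤ α / Real.pi^2 * ε := by positivity
    have hy0 : (0:ℝ) ≤ α / Real.pi^2 * ε * (256*α/(9*Real.pi^2)) * ε / 4 := by positivity
    have hz0 : (0:ℝ) ≤ 256*α/(9*Real.pi^2) * ε / 4 := by positivity
    have hcsplit : ENNReal.ofReal (α/Real.pi^2*ε*(4 + 256*α/(9*Real.pi^2)*ε))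
        = 4 * (ENNReal.ofReal (α / Real.pi^2 * ε)
            + ENNReal.ofReal (α / Real.pi^2 * ε * (256*α/(9*Real.pi^2)) * ε / 4)) := by
      rw [← ENNReal.ofReal_ofNat 4, ← ENNReal.ofReal_add hx0 hy0,
        ← ENNReal.ofReal_mul (by norm_num : (0:ℝ) ≤ 4)]
      congr 1
      ring
    rw [hcsplit]
    have hrw : 4 * (∑' i, (latticeSeg ε (1,0) A).indicator
            (fun i => ENNReal.ofReal (f0 (v (i+(1,0)) - v i))) i)
        + (4 * (∑' i, (latticeSeg ε (0,1) A).indicator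
            (fun i => ENNReal.ofReal (fHalf (v (i+(0,1)) - v i))) i)
          + 4 * (ENNReal.ofReal (α / Real.pi^2 * ε)
            + ENNReal.ofReal (α / Real.pi^2 * ε * (256*α/(9*Real.pi^2)) * ε / 4)) *
            ∑' i, (latticeSeg ε (0,2) A).indicator
              (fun i => ENNReal.ofReal (f1 (v (i+(0,2)) - v i))) i)
        = 4 * (Fpedge α ε v A
            + ENNReal.ofReal (α / Real.pi^2 * ε * (256*α/(9*Real.pi^2)) * ε / 4) *
              ∑' i, (latticeSeg ε (0,2) A).indicator
                (fun i => ENNReal.ofReal (f1 (v (i+(0,2)) - v i))) i) := by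
      rw [hF]
      ring
    rw [hrw]
    refine mul_le_mul_right (add_le_add_right ?_ _) _
    -- the error term
    have hT1F : ENNReal.ofReal (α / Real.pi^2 * ε) *
        (∑' i, (latticeSeg ε (0,2) A).indicator
          (fun i => ENNReal.ofReal (f1 (v (i+(0,2)) - v i))) i) ≤ Fpedge α ε v A := by
      rw [hF]
      exact le_add_self
    calc ENNReal.ofReal (α / Real.pi^2 * ε * (256*α/(9*Real.pi^2)) * ε / 4) *
          (∑' i, (latticeSeg ε (0,2) A).indicator
            (fun i => ENNReal.ofReal (f1 (v (i+(0,2)) - v i))) i)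
        = ENNReal.ofReal (256*α/(9*Real.pi^2) * ε / 4) *
            (ENNReal.ofReal (α / Real.pi^2 * ε) *
              ∑' i, (latticeSeg ε (0,2) A).indicator
                (fun i => ENNReal.ofReal (f1 (v (i+(0,2)) - v i))) i) := by
          rw [← mul_assoc, ← ENNReal.ofReal_mul hz0]
          congr 2
          ring
      _ ≤ ENNReal.ofReal (256*α/(9*Real.pi^2) * ε / 4) * ENNReal.ofReal (C₀ * |Real.log ε|) :=
          mul_le_mul_right (le_trans hT1F hFle) _
      _ = ENNReal.ofReal (256*α/(9*Real.pi^2) * ε / 4 * (C₀ * |Real.log ε|)) :=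
          (ENNReal.ofReal_mul hz0).symm
      _ ≤ ENNReal.ofReal ((256*α/(9*Real.pi^2)*C₀/4 + 1) * Real.sqrt ε * |Real.log ε|) := by
          apply ENNReal.ofReal_le_ofReal
          have hsε : ε ≤ Real.sqrt ε := by
            nlinarith [Real.sq_sqrt hε0.le, Real.sqrt_le_one.mpr hε1'.le, Real.sqrt_nonneg ε]
          have hzC : 256*α/(9*Real.pi^2) * ε / 4 * C₀
              ≤ (256*α/(9*Real.pi^2)*C₀/4 + 1) * Real.sqrt ε := by
            have hKpos : (0:ℝ) ≤ 256*α/(9*Real.pi^2)*C₀/4 := by positivity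
            calc 256*α/(9*Real.pi^2) * ε / 4 * C₀
                = (256*α/(9*Real.pi^2)*C₀/4) * ε := by ring
              _ ≤ (256*α/(9*Real.pi^2)*C₀/4) * Real.sqrt ε :=
                  mul_le_mul_of_nonneg_left hsε hKpos
              _ ≤ (256*α/(9*Real.pi^2)*C₀/4 + 1) * Real.sqrt ε :=
                  mul_le_mul_of_nonneg_right (by linarith) (Real.sqrt_nonneg ε)
          calc 256*α/(9*Real.pi^2) * ε / 4 * (C₀ * |Real.log ε|)
              = (256*α/(9*Real.pi^2) * ε / 4 * C₀) * |Real.log ε| := by ring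
            _ ≤ ((256*α/(9*Real.pi^2)*C₀/4 + 1) * Real.sqrt ε) * |Real.log ε| :=
                mul_le_mul_of_nonneg_right hzC (abs_nonneg _)
            _ = _ := by ring
  calc (1 / 4 : ℝ≥0∞) * ∑ j : Fin 4,
        WMen α R ε j (fun i => Complex.exp (2 * Real.pi * Complex.I * (v i : ℂ))) A
      ≤ (1 / 4 : ℝ≥0∞) * (4 * (Fpedge α ε v A
          + ENNReal.ofReal ((256*α/(9*Real.pi^2)*C₀/4 + 1) * Real.sqrt ε * |Real.log ε|))) :=
        mul_le_mul_right hmain _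
    _ = Fpedge α ε v A
          + ENNReal.ofReal ((256*α/(9*Real.pi^2)*C₀/4 + 1) * Real.sqrt ε * |Real.log ε|) := by
        rw [← mul_assoc, one_div, ENNReal.inv_mul_cancel (by norm_num) (by norm_num), one_mul]
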